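/- arXiv:2504.09124 — 4 statements merged into one kernel-verified Lean document; each statement's English description precedes it below -/
import Mathlib

section
/- For two matrices M₁, M₂ in 𝒟 (unitary matrices with nonvanishing last row), p(M₁) = p(M₂) holds if and only if M₂ = M₁ g for some diagonal unitary matrix g ∈ U(1)^n. -/
open Matrix in
/-- For unitary matrices `M₁, M₂` with nonvanishing last row, the affine-coordinate
projections `p(M₁)` and `p(M₂)` agree iff `M₂ = M₁ g` for some diagonal unitary `g`. -/
theorem stmt_1 (n : ℕ) (hn : 2 ≤ n)
    (L : Fin n) (hL : (L : ℕ) = n - 1)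
    (M₁ M₂ : Matrix (Fin n) (Fin n) ℂ)
    (hM₁ : M₁ ∈ Matrix.unitaryGroup (Fin n) ℂ)
    (hM₂ : M₂ ∈ Matrix.unitaryGroup (Fin n) ℂ)
    (h₁ : ∀ j, M₁ L j ≠ 0) (h₂ : ∀ j, M₂ L j ≠ 0) :
    (∀ k j, M₁ k j / M₁ L j = M₂ k j / M₂ L j) ↔
      ∃ g : Fin n → ℂ, (∀ j, ‖g j‖ = 1) ∧ M₂ = M₁ * Matrix.diagonal g := by
  have col : ∀ (M : Matrix (Fin n) (Fin n) ℂ),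
      M ∈ Matrix.unitaryGroup (Fin n) ℂ →
      ∀ j, ∑ k, (starRingEnd ℂ) (M k j) * M k j = 1 := by
    intro M hM j
    have h := (Matrix.mem_unitaryGroup_iff'.mp hM)
    have := congrFun (congrFun h j) j
    simpa [Matrix.mul_apply, Matrix.star_apply, Matrix.one_apply] using this
  constructor
  · intro h
    have hg : ∀ j k, M₂ k j = (M₂ L j / M₁ L j) * M₁ k j := by
      intro j k
      have key : M₁ k j * M₂ L j = M₂ k j * M₁ L j :=
        (div_eq_div_iff (h₁ j) (h₂ j)).mp (h k j)
      rw [div_mul_eq_mul_div, eq_div_iff (h₁ j)]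
      linear_combination -key
    refine ⟨fun j => M₂ L j / M₁ L j, ?_, ?_⟩
    · intro j
      have h1 := col M₁ hM₁ j
      have h2 := col M₂ hM₂ j
      set g := M₂ L j / M₁ L j with hgdef
      have hgg : (starRingEnd ℂ) g * g = 1 := by
        calc (starRingEnd ℂ) g * g
            = ((starRingEnd ℂ) g * g) * ∑ k, (starRingEnd ℂ) (M₁ k j) * M₁ k j := by
              rw [h1, mul_one]
          _ = ∑ k, (starRingEnd ℂ) (M₂ k j) * M₂ k j := by
              rw [Finset.mul_sum]
              refine Finset.sum_congr rfl fun k _ => ?_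
              rw [hg j k, RingHom.map_mul]; ring
          _ = 1 := h2
      have hns : Complex.normSq g = 1 := by
        have : (Complex.normSq g : ℂ) = 1 := by
          rw [← Complex.mul_conj]; linear_combination hgg
        exact_mod_cast this
      rw [Complex.norm_def, hns, Real.sqrt_one]
    · ext k j
      rw [Matrix.mul_apply]
      simp only [Matrix.diagonal, Matrix.of_apply]
      rw [Finset.sum_eq_single j]
      · rw [if_pos rfl, hg j k]; ring
      · intro b _ hb; rw [if_neg hb, mul_zero]
      · intro hj; exact absurd (Finset.mem_univ j) hj
  · rintro ⟨g, hg, rfl⟩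
    intro k j
    have hgj : g j ≠ 0 := by
      intro h0
      have := hg j
      rw [h0] at this
      simp at this
    have hLj : (M₁ * Matrix.diagonal g) L j = M₁ L j * g j := by
      simp [Matrix.mul_apply, Matrix.diagonal_apply, Finset.sum_ite_eq]
    have hkj : (M₁ * Matrix.diagonal g) k j = M₁ k j * g j := by
      simp [Matrix.mul_apply, Matrix.diagonal_apply, Finset.sum_ite_eq]
    rw [hLj, hkj, mul_div_mul_right _ _ hgj]
end

section
/- The image 𝒪 = p(𝒟) equals the set of tuples w = (w₁,…,w_n) ∈ (ℂ^{n-1})^n such that w_i* w_j = −1 for all 1 ≤ i < j ≤ n. -/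
open Matrix in
/-- The image `𝒪 = p(𝒟)` of the set of unitary matrices with nonvanishing last row under
the affine-coordinate projection `p` equals the set of tuples `w = (w₁, …, wₙ)` of vectors
in `ℂ^{n-1}` such that `wᵢ* wⱼ = −1` for all `i < j`. -/
theorem stmt_2 (n : ℕ) (hn : 2 ≤ n)
    (L : Fin n) (hL : (L : ℕ) = n - 1)
    (emb : Fin (n - 1) → Fin n) (hemb : ∀ s, (emb s : ℕ) = (s : ℕ)) :
    {w : Fin n → Fin (n - 1) → ℂ |
        ∃ M ∈ Matrix.unitaryGroup (Fin n) ℂ,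
          (∀ j, M L j ≠ 0) ∧ ∀ j s, w j s = M (emb s) j / M L j} =
      {w : Fin n → Fin (n - 1) → ℂ |
        ∀ i j : Fin n, i < j → ∑ s, (starRingEnd ℂ) (w i s) * w j s = -1} := by
  obtain ⟨m, rfl⟩ : ∃ m, n = m + 1 := ⟨n - 1, by omega⟩
  have hL' : L = Fin.last m := Fin.ext (by simpa using hL)
  have hemb' : ∀ s : Fin (m + 1 - 1), emb s = Fin.castSucc s := by
    intro s; apply Fin.ext; simpa using hemb s
  ext w
  simp only [Set.mem_setOf_eq]
  constructor
  · rintro ⟨M, hM, hMne, hw⟩ i j hij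
    have h1 : star M * M = 1 := (Matrix.mem_unitaryGroup_iff'.mp hM)
    have h2 : ∑ k, (starRingEnd ℂ) (M k i) * M k j = 0 := by
      have := congrFun (congrFun h1 i) j
      simpa [Matrix.mul_apply, Matrix.one_apply, hij.ne, Matrix.star_apply] using this
    have h3 : ∑ s : Fin m, (starRingEnd ℂ) (M s.castSucc i) * M s.castSucc j
        = -((starRingEnd ℂ) (M L i) * M L j) := by
      rw [Fin.sum_univ_castSucc] at h2
      rw [hL']; linear_combination h2
    have hden : (starRingEnd ℂ) (M L i) * M L j ≠ 0 :=
      mul_ne_zero (by simpa using hMne i) (hMne j)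
    calc ∑ s, (starRingEnd ℂ) (w i s) * w j s
        = ∑ s : Fin m, ((starRingEnd ℂ) (M s.castSucc i) * M s.castSucc j) /
            ((starRingEnd ℂ) (M L i) * M L j) := by
          apply Finset.sum_congr rfl
          intro s _
          rw [hw i s, hw j s, hemb' s, map_div₀]
          ring
      _ = -1 := by
          rw [← Finset.sum_div, h3, neg_div, div_self hden]
  · intro hw
    set t : Fin (m+1) → ℝ := fun j => Real.sqrt (∑ s, Complex.normSq (w j s) + 1) with ht
    have htpos : ∀ j, 0 < t j := by
      intro j
      apply Real.sqrt_pos.mpr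
      have : (0:ℝ) ≤ ∑ s, Complex.normSq (w j s) :=
        Finset.sum_nonneg fun s _ => Complex.normSq_nonneg _
      linarith
    set c : Fin (m+1) → ℂ := fun j => ((t j : ℂ))⁻¹ with hc
    have hcne : ∀ j, c j ≠ 0 := by
      intro j
      simp [hc, Complex.ofReal_ne_zero, (htpos j).ne']
    set M : Matrix (Fin (m+1)) (Fin (m+1)) ℂ :=
      fun i j => Fin.lastCases (c j) (fun s => w j s * c j) i with hMdef
    have hMlast : ∀ j, M (Fin.last m) j = c j := fun j => by
      simp [hMdef]
    have hMcs : ∀ (s : Fin m) j, M s.castSucc j = w j s * c j := fun s j => by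
      simp [hMdef]
    -- orthogonality for distinct columns
    have horth : ∀ i j : Fin (m+1), i ≠ j →
        ∑ s : Fin m, (starRingEnd ℂ) (w i s) * w j s = -1 := by
      intro i j hij
      rcases lt_or_gt_of_ne hij with h | h
      · exact hw i j h
      · have := hw j i h
        have := congrArg (starRingEnd ℂ) this
        simpa [map_sum, mul_comm] using this
    have hunit : M ∈ Matrix.unitaryGroup (Fin (m+1)) ℂ := by
      rw [Matrix.mem_unitaryGroup_iff']
      ext i j
      rw [Matrix.mul_apply, Matrix.one_apply]
      have expand : ∀ k, (star M) i k * M k j = (starRingEnd ℂ) (M k i) * M k j := by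
        intro k; simp [Matrix.star_apply]
      simp only [expand]
      rw [Fin.sum_univ_castSucc]
      simp only [hMcs, hMlast, _root_.map_mul]
      have key : (∑ s : Fin m, (starRingEnd ℂ) (w i s) * (starRingEnd ℂ) (c i) *
          (w j s * c j)) + (starRingEnd ℂ) (c i) * c j
          = ((starRingEnd ℂ) (c i) * c j) *
            ((∑ s : Fin m, (starRingEnd ℂ) (w i s) * w j s) + 1) := by
        rw [mul_add, mul_one, Finset.mul_sum]
        congr 1
        apply Finset.sum_congr rfl
        intro s _
        ring
      rw [key]
      by_cases hij : i = j
      · subst hij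
        rw [if_pos rfl]
        have hA : (0:ℝ) < ∑ s, Complex.normSq (w i s) + 1 := by
          have : (0:ℝ) ≤ ∑ s, Complex.normSq (w i s) :=
            Finset.sum_nonneg fun s _ => Complex.normSq_nonneg _
          linarith
        have hsum : (∑ s : Fin m, (starRingEnd ℂ) (w i s) * w i s) + 1
            = ((∑ s, Complex.normSq (w i s) + 1 : ℝ) : ℂ) := by
          push_cast
          congr 1
          apply Finset.sum_congr rfl
          intro s _
          rw [Complex.normSq_eq_conj_mul_self]
        rw [hsum]
        have hci : (starRingEnd ℂ) (c i) * c i = ((∑ s, Complex.normSq (w i s) + 1 : ℝ) : ℂ)⁻¹ := by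
          simp only [hc, map_inv₀, Complex.conj_ofReal]
          rw [← mul_inv, ← Complex.ofReal_mul,
            Real.mul_self_sqrt hA.le]
        rw [hci, inv_mul_cancel₀ (by exact_mod_cast hA.ne')]
      · rw [if_neg hij, horth i j hij]
        ring
    refine ⟨M, hunit, ?_, ?_⟩
    · intro j
      rw [hL', hMlast]
      exact hcne j
    · intro j s
      rw [hemb' s, hL', hMlast, hMcs, mul_div_cancel_right₀ _ (hcne j)]
end

section
/- The function f(λ) = Π_{j=1}^n λ_j^{|u_j|/2} on the interior of the simplex 𝒯_n is an eigenfunction of the operator 𝒢 − (1/4)Σ_{j=1}^n u_j² (1−λ_j)/λ_j with eigenvalue −((n−1)/2) Σ_{j=1}^n |u_j| − (1/4) Σ_{1≤i≠j≤n} |u_i u_j|, where 𝒢 = Σ_j λ_j(1−λ_j)∂²_{λ_j} + Σ_j (1 − nλ_j)∂_{λ_j} − Σ_{j≠ℓ} λ_j λ_ℓ ∂²_{λ_j λ_ℓ}. -/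
open Finset

private lemma pd_first {n : ℕ} (u : Fin n → ℝ) (f : (Fin n → ℝ) → ℝ)
    (hf : ∀ l : Fin n → ℝ, f l = ∏ j, (l j) ^ (|u j| / 2 : ℝ))
    (pD : Fin n → ((Fin n → ℝ) → ℝ) → ((Fin n → ℝ) → ℝ))
    (hpD : ∀ j g l, pD j g l = deriv (fun t => g (Function.update l j t)) (l j))
    (m : Fin n) (x : Fin n → ℝ) (hx : 0 < x m) :
    pD m f x = (|u m| / 2) * (x m) ^ ((|u m| / 2) - 1 : ℝ)
      * ∏ k ∈ univ.erase m, (x k) ^ (|u k| / 2 : ℝ) := by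
  rw [hpD]
  have hfun : (fun t => f (Function.update x m t))
      = fun t => t ^ (|u m| / 2 : ℝ) * ∏ k ∈ univ.erase m, (x k) ^ (|u k| / 2 : ℝ) := by
    funext t
    rw [hf, ← Finset.mul_prod_erase _ _ (Finset.mem_univ m), Function.update_self]
    congr 1
    exact Finset.prod_congr rfl fun k hk => by
      rw [Function.update_of_ne (Finset.ne_of_mem_erase hk)]
  rw [hfun]
  exact ((Real.hasDerivAt_rpow_const (Or.inl hx.ne')).mul_const _).deriv

/-- The function `f(λ) = Π_j λ_j^{|u_j|/2}` is an eigenfunction of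
`𝒢 − (1/4)Σ_j u_j²(1−λ_j)/λ_j` on the open simplex, with eigenvalue
`−((n−1)/2)Σ_j |u_j| − (1/4)Σ_{i≠j} |u_i u_j|`, where `𝒢` is the Jacobi operator
`Σ_j λ_j(1−λ_j)∂²_{λ_j} + Σ_j (1−nλ_j)∂_{λ_j} − Σ_{j≠ℓ} λ_jλ_ℓ ∂²_{λ_jλ_ℓ}`. -/
theorem stmt_6 (n : ℕ) (hn : 2 ≤ n) (u : Fin n → ℝ)
    (f : (Fin n → ℝ) → ℝ)
    (hf : ∀ l : Fin n → ℝ, f l = ∏ j, (l j) ^ (|u j| / 2 : ℝ))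
    (pD : Fin n → ((Fin n → ℝ) → ℝ) → ((Fin n → ℝ) → ℝ))
    (hpD : ∀ j g l, pD j g l = deriv (fun t => g (Function.update l j t)) (l j)) :
    ∀ l : Fin n → ℝ, (∀ j, 0 < l j) → (∑ j, l j = 1) →
      (∑ j, l j * (1 - l j) * pD j (pD j f) l)
          + (∑ j, (1 - n * l j) * pD j f l)
          - (∑ j, ∑ m, if j ≠ m then l j * l m * pD j (pD m f) l else 0)
          - (1 / 4) * (∑ j, (u j) ^ 2 * (1 - l j) / l j) * f l
        = (-((n - 1 : ℝ) / 2) * (∑ j, |u j|)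
            - (1 / 4) * ∑ j, ∑ m, if j ≠ m then |u j * u m| else 0) * f l := by
  intro l hl _
  set A : Fin n → ℝ := fun j => |u j| / 2 with hA
  -- first derivative, cleaned
  have d1 : ∀ j, pD j f l = A j / l j * f l := by
    intro j
    rw [pd_first u f hf pD hpD j l (hl j), hf,
      ← Finset.mul_prod_erase _ _ (Finset.mem_univ j),
      Real.rpow_sub (hl j), Real.rpow_one]
    ring
  -- diagonal second derivative
  have d2 : ∀ j, pD j (pD j f) l = A j * (A j - 1) / (l j) ^ 2 * f l := by
    intro j
    rw [hpD]
    have hEq : (fun t => pD j f (Function.update l j t)) =ᶠ[nhds (l j)]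
        fun t => A j * t ^ (A j - 1 : ℝ)
          * ∏ k ∈ univ.erase j, (l k) ^ (A k : ℝ) := by
      filter_upwards [eventually_gt_nhds (hl j)] with t ht
      rw [pd_first u f hf pD hpD j _ (by simpa using ht), Function.update_self]
      congr 1
      exact Finset.prod_congr rfl fun k hk => by
        rw [Function.update_of_ne (Finset.ne_of_mem_erase hk)]
    rw [hEq.deriv_eq]
    have h := (((Real.hasDerivAt_rpow_const (x := l j) (p := A j - 1)
      (Or.inl (hl j).ne')).const_mul (A j)).mul_const
      (∏ k ∈ univ.erase j, (l k) ^ (A k : ℝ))).deriv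
    rw [h, hf, ← Finset.mul_prod_erase _ _ (Finset.mem_univ j),
      Real.rpow_sub (hl j), Real.rpow_sub (hl j), Real.rpow_one]
    ring
  -- off-diagonal second derivative
  have d3 : ∀ j m, j ≠ m → pD j (pD m f) l = A j * A m / (l j * l m) * f l := by
    intro j m hjm
    rw [hpD]
    have hfun : (fun t => pD m f (Function.update l j t))
        = fun t => (A m * (l m) ^ (A m - 1 : ℝ))
          * (t ^ (A j : ℝ) * ∏ k ∈ (univ.erase m).erase j, (l k) ^ (A k : ℝ)) := by
      funext t
      have hxm : (0 : ℝ) < Function.update l j t m := by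
        rw [Function.update_of_ne (Ne.symm hjm)]; exact hl m
      rw [pd_first u f hf pD hpD m _ hxm,
        Function.update_of_ne (Ne.symm hjm),
        ← Finset.mul_prod_erase _ _ (Finset.mem_erase.mpr ⟨hjm, Finset.mem_univ j⟩),
        Function.update_self]
      have : ∏ k ∈ (univ.erase m).erase j, (Function.update l j t k) ^ (A k : ℝ)
          = ∏ k ∈ (univ.erase m).erase j, (l k) ^ (A k : ℝ) :=
        Finset.prod_congr rfl fun k hk => by
          rw [Function.update_of_ne (Finset.ne_of_mem_erase hk)]
      rw [this]
    rw [hfun]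
    have h := (((Real.hasDerivAt_rpow_const (x := l j) (p := A j)
      (Or.inl (hl j).ne')).mul_const
      (∏ k ∈ (univ.erase m).erase j, (l k) ^ (A k : ℝ))).const_mul
      (A m * (l m) ^ (A m - 1 : ℝ))).deriv
    rw [h, hf, ← Finset.mul_prod_erase _ _ (Finset.mem_univ m),
      ← Finset.mul_prod_erase _ _ (Finset.mem_erase.mpr ⟨hjm, Finset.mem_univ j⟩),
      Real.rpow_sub (hl j), Real.rpow_sub (hl m), Real.rpow_one, Real.rpow_one]
    ring
  -- rewrite each sum as coefficient times f l
  have hS1 : ∑ j, l j * (1 - l j) * pD j (pD j f) l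
      = (∑ j, l j * (1 - l j) * (A j * (A j - 1) / (l j) ^ 2)) * f l := by
    rw [Finset.sum_mul]
    exact Finset.sum_congr rfl fun j _ => by rw [d2 j]; ring
  have hS2 : ∑ j, (1 - n * l j) * pD j f l
      = (∑ j, (1 - n * l j) * (A j / l j)) * f l := by
    rw [Finset.sum_mul]
    exact Finset.sum_congr rfl fun j _ => by rw [d1 j]; ring
  have hS3 : (∑ j, ∑ m, if j ≠ m then l j * l m * pD j (pD m f) l else 0)
      = (∑ j, ∑ m, if j ≠ m then |u j * u m| / 4 else 0) * f l := by
    rw [Finset.sum_mul]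
    refine Finset.sum_congr rfl fun j _ => ?_
    rw [Finset.sum_mul]
    refine Finset.sum_congr rfl fun m _ => ?_
    by_cases hjm : j = m
    · simp [hjm]
    · rw [if_pos hjm, if_pos hjm, d3 j m hjm, abs_mul]
      have := (hl j).ne'
      have := (hl m).ne'
      field_simp [hA]
      ring
  rw [hS1, hS2, hS3]
  have key : (∑ j, l j * (1 - l j) * (A j * (A j - 1) / (l j) ^ 2))
      + (∑ j, (1 - n * l j) * (A j / l j))
      - (1 / 4) * (∑ j, (u j) ^ 2 * (1 - l j) / l j)
      = -((n - 1 : ℝ) / 2) * (∑ j, |u j|) := by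
    rw [Finset.mul_sum, ← Finset.sum_add_distrib, ← Finset.sum_sub_distrib,
      Finset.mul_sum]
    refine Finset.sum_congr rfl fun j _ => ?_
    have hlj := (hl j).ne'
    have hu : (u j) ^ 2 = (2 * A j) ^ 2 := by
      rw [hA]; rw [← sq_abs]; ring
    rw [hu]
    field_simp
    ring
  have hd : ∑ j, ∑ m, (if j ≠ m then |u j * u m| / 4 else 0)
      = (1 / 4) * ∑ j, ∑ m, (if j ≠ m then |u j * u m| else 0) := by
    rw [Finset.mul_sum]
    refine Finset.sum_congr rfl fun j _ => ?_
    rw [Finset.mul_sum]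
    refine Finset.sum_congr rfl fun m _ => ?_
    split <;> ring
  linear_combination (f l) * key - (f l) * hd
end

section
/- If X_t is the covariance matrix with diagonal entries ∫₀ᵗ (1−λ_j(s))/λ_j(s) ds and off-diagonal entries t, where λ(s) ∈ 𝒯_n with each λ_j(s) ∈ (0,1), then for every u ∈ ℝ^n, uᵀ X_t u ≥ 0; i.e. X_t is positive semidefinite. -/
set_option maxHeartbeats 1000000

open Finset in
lemma key_ineq (n : ℕ) (lam u : Fin n → ℝ) (hpos : ∀ j, 0 < lam j)
    (hsum : ∑ j, lam j = 1) :
    0 ≤ ∑ j, (u j)^2 * ((1 - lam j) / lam j) + ((∑ j, u j)^2 - ∑ j, (u j)^2) := by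
  set v : Fin n → ℝ := fun j => u j / lam j with hv
  have hu : ∀ j, u j = lam j * v j := fun j => by
    rw [hv]
    simp only
    rw [mul_comm, div_mul_cancel₀ _ (hpos j).ne']
  set A : ℝ := ∑ j, lam j * (v j)^2 with hA
  set B : ℝ := ∑ j, lam j * v j with hB
  have hS : ∑ j, ∑ m, lam j * lam m * (v j + v m)^2 = 2 * A + 2 * B^2 := by
    have h1 : ∀ j, ∑ m, lam j * lam m * (v j + v m)^2
        = lam j * (v j)^2 + lam j * A + (lam j * v j) * (2 * B) := by
      intro j
      have h2 : ∀ m, lam j * lam m * (v j + v m)^2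
          = ((v j)^2 * lam j) * lam m + lam j * (lam m * (v m)^2)
            + (lam j * v j * 2) * (lam m * v m) := fun m => by ring
      rw [Finset.sum_congr rfl fun m _ => h2 m, Finset.sum_add_distrib,
        Finset.sum_add_distrib, ← Finset.mul_sum, ← Finset.mul_sum, ← Finset.mul_sum,
        hsum, ← hA, ← hB]
      ring
    rw [Finset.sum_congr rfl fun j _ => h1 j, Finset.sum_add_distrib,
      Finset.sum_add_distrib, ← Finset.sum_mul, ← Finset.sum_mul, ← hA, ← hB, hsum]
    ring
  have hdiag : ∑ j, lam j * lam j * (v j + v j)^2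
      ≤ ∑ j, ∑ m, lam j * lam m * (v j + v m)^2 :=
    Finset.sum_le_sum fun j _ =>
      Finset.single_le_sum (f := fun m => lam j * lam m * (v j + v m)^2)
        (fun m _ => mul_nonneg (mul_nonneg (hpos j).le (hpos m).le)
        (sq_nonneg _)) (Finset.mem_univ j)
  have hd2 : ∑ j, lam j * lam j * (v j + v j)^2 = 4 * ∑ j, (lam j * v j)^2 := by
    rw [Finset.mul_sum]; exact Finset.sum_congr rfl fun j _ => by ring
  have e1 : ∑ j, (u j)^2 * ((1 - lam j)/lam j)
      = ∑ j, (lam j * (v j)^2 - (lam j * v j)^2) :=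
    Finset.sum_congr rfl fun j _ => by
      rw [hu j]; field_simp [(hpos j).ne']
  have e2 : ∑ j, u j = B := Finset.sum_congr rfl fun j _ => hu j
  have e3 : ∑ j, (u j)^2 = ∑ j, (lam j * v j)^2 :=
    Finset.sum_congr rfl fun j _ => by rw [hu j]
  rw [e1, e2, e3, Finset.sum_sub_distrib, ← hA]
  linarith [hdiag, hS, hd2]

open Matrix MeasureTheory in
/-- The covariance matrix with diagonal entries `∫₀ᵗ (1−λ_j(s))/λ_j(s) ds` and off-diagonal
entries `t`, where `λ(s)` lies in the simplex `𝒯_n` with `λ_j(s) ∈ (0,1)`, is positive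
semidefinite: `uᵀ Σ(t) u ≥ 0` for every `u ∈ ℝⁿ`. -/
theorem stmt_16 (n : ℕ) (hn : 2 ≤ n) (t : ℝ) (ht : 0 < t)
    (lam : ℝ → Fin n → ℝ)
    (hlam : ∀ s ∈ Set.Icc (0 : ℝ) t,
      (∀ j, lam s j ∈ Set.Ioo (0 : ℝ) 1) ∧ ∑ j, lam s j = 1)
    (hint : ∀ j, IntervalIntegrable (fun s => (1 - lam s j) / lam s j) volume 0 t)
    (X : Matrix (Fin n) (Fin n) ℝ)
    (hX : ∀ j m, X j m =
      if j = m then ∫ s in (0 : ℝ)..t, (1 - lam s j) / lam s j else t) :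
    ∀ u : Fin n → ℝ, 0 ≤ u ⬝ᵥ X.mulVec u := by
  intro u
  set c : ℝ := ∑ j, u j with hc
  set q : ℝ := ∑ j, (u j)^2 with hq
  set I : Fin n → ℝ := fun j => ∫ s in (0:ℝ)..t, (1 - lam s j) / lam s j with hI
  have hrow : ∀ j, (∑ m, X j m * u m) = I j * u j + t * (c - u j) := by
    intro j
    have h1 : ∀ m, X j m * u m = t * u m + (if m = j then (I j - t) * u j else 0) := by
      intro m
      rw [hX j m]
      rcases eq_or_ne j m with h | h
      · subst h; rw [if_pos rfl, if_pos rfl]; simp only [hI]; ring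
      · rw [if_neg h, if_neg (Ne.symm h)]; ring
    rw [Finset.sum_congr rfl fun m _ => h1 m, Finset.sum_add_distrib,
      Finset.sum_ite_eq' Finset.univ j, ← Finset.mul_sum, ← hc]
    simp only [Finset.mem_univ, if_pos]
    ring
  have hform : u ⬝ᵥ X.mulVec u = (∑ j, (u j)^2 * I j) + (c^2 - q) * t := by
    have h0 : u ⬝ᵥ X.mulVec u = ∑ j, u j * (I j * u j + t * (c - u j)) := by
      simp only [dotProduct, mulVec, dotProduct]
      exact Finset.sum_congr rfl fun j _ => by rw [hrow j]
    have h3 : ∑ j, u j * (I j * u j + t * (c - u j))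
        = ∑ j, ((u j)^2 * I j + (u j * (c * t) - (u j)^2 * t)) :=
      Finset.sum_congr rfl fun j _ => by ring
    rw [h0, h3, Finset.sum_add_distrib, Finset.sum_sub_distrib,
      ← Finset.sum_mul, ← Finset.sum_mul, ← hc, ← hq]
    ring
  have hFint : IntervalIntegrable
      (fun s => ∑ j, (u j)^2 * ((1 - lam s j) / lam s j)) volume 0 t := by
    have h := IntervalIntegrable.sum (μ := volume) (a := (0:ℝ)) (b := t) Finset.univ
      (f := fun j s => (u j)^2 * ((1 - lam s j) / lam s j))
      (fun j _ => (hint j).const_mul _)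
    convert h using 1
    · rfl
    funext s
    simp [Finset.sum_apply]
  have hposint : 0 ≤ ∫ s in (0:ℝ)..t,
      (∑ j, (u j)^2 * ((1 - lam s j) / lam s j) + (c^2 - q)) := by
    apply intervalIntegral.integral_nonneg ht.le
    intro s hs
    obtain ⟨h1, h2⟩ := hlam s hs
    exact key_ineq n (lam s) u (fun j => (h1 j).1) h2
  have hsplit : ∫ s in (0:ℝ)..t,
      (∑ j, (u j)^2 * ((1 - lam s j) / lam s j) + (c^2 - q))
      = (∑ j, (u j)^2 * I j) + (c^2 - q) * t := by
    rw [intervalIntegral.integral_add hFint intervalIntegrable_const,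
      intervalIntegral.integral_finset_sum (fun j _ => (hint j).const_mul _),
      intervalIntegral.integral_const]
    simp only [smul_eq_mul, sub_zero]
    congr 1
    · exact Finset.sum_congr rfl fun j _ => by
        rw [intervalIntegral.integral_const_mul]
    · ring
  rw [hform, ← hsplit]
  exact hposint
end
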